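/- Let κ be an infinite regular cardinal and let ⟨z_α : α < κ⁺⟩ be a sequence enumerating all of [κ⁺]^{<κ} (i.e., the map α ↦ z_α is surjective onto the collection of subsets of κ⁺ of cardinality less than κ). Then the set M = {γ ∈ S^{κ⁺}_κ : γ is approachable with respect to ⟨z_α : α < κ⁺⟩} is a stationary subset of κ⁺. -/

import Mathlib

open Set Cardinal

/-- `C` is a closed unbounded subset of the ordinal `δ`. -/
def IsClubIn (δ : Ordinal.{0}) (C : Set Ordinal.{0}) : Prop :=
  C ⊆ Set.Iio δ ∧
  (∀ α < δ, ∃ β ∈ C, α < β) ∧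
  (∀ α < δ, 0 < α → (∀ β < α, ∃ γ ∈ C, β < γ ∧ γ < α) → α ∈ C)

/-- `S` is stationary in `δ`: it meets every club subset of `δ`. -/
def IsStationaryIn (δ : Ordinal.{0}) (S : Set Ordinal.{0}) : Prop :=
  ∀ C, IsClubIn δ C → (S ∩ C).Nonempty

/-- `γ` is approachable with respect to the sequence `z`: there is a strictly increasing
sequence of length `cof γ`, cofinal in `γ`, all of whose proper initial segments appear
in `z` before `γ`. -/
def Approachable (z : Ordinal.{0} → Set Ordinal.{0}) (γ : Ordinal.{0}) : Prop :=
  ∃ f : Ordinal.{0} → Ordinal.{0},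
    (∀ ξ η, ξ < η → η < γ.cof.ord → f ξ < f η) ∧
    (∀ ξ < γ.cof.ord, f ξ < γ) ∧
    (∀ β < γ, ∃ ξ < γ.cof.ord, β ≤ f ξ) ∧
    (∀ ξ < γ.cof.ord, ∃ α < γ, z α = f '' Set.Iio ξ)

/-- The set `S^{κ⁺}_κ` of ordinals below `κ⁺` of cofinality `κ`. -/
def SCof (κ : Cardinal.{0}) : Set Ordinal.{0} :=
  {γ | γ < (Order.succ κ).ord ∧ γ.cof = κ}

theorem statement0 (κ : Cardinal.{0}) (hκ : ℵ₀ ≤ κ) (hreg : κ.IsRegular)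
    (z : Ordinal.{0} → Set Ordinal.{0})
    (hz : ∀ α < (Order.succ κ).ord,
      z α ⊆ Set.Iio (Order.succ κ).ord ∧ #(z α) < Cardinal.lift.{1} κ)
    (hsurj : ∀ x : Set Ordinal.{0}, x ⊆ Set.Iio (Order.succ κ).ord →
      #x < Cardinal.lift.{1} κ → ∃ α < (Order.succ κ).ord, z α = x) :
    IsStationaryIn (Order.succ κ).ord {γ | γ ∈ SCof κ ∧ Approachable z γ} := by
  intro C hC
  obtain ⟨hCsub, hCunb, hCcl⟩ := hC
  set δ := (Order.succ κ).ord with hδ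
  have hδcof : δ.cof = Order.succ κ := (Cardinal.isRegular_succ hκ).cof_eq
  have hκcof : κ.ord.cof = κ := hreg.cof_eq
  have hκlim : Order.IsSuccLimit κ.ord := Cardinal.isSuccLimit_ord hκ
  classical
  -- the recursively defined sequence
  let body : ∀ ξ : Ordinal.{0}, (∀ η, η < ξ → Ordinal.{0}) → Ordinal.{0} :=
    fun ξ IH => sInf {β | β ∈ C ∧ (∀ η, ∀ h : η < ξ, IH η h < β) ∧
      ∃ α, α < β ∧ z α = Set.range fun η : Set.Iio ξ => IH η.1 η.2}
  let F : Ordinal.{0} → Ordinal.{0} := fun ξ => Ordinal.lt_wf.fix body ξ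
  have hfix : ∀ ξ, F ξ = sInf {β | β ∈ C ∧ (∀ η, η < ξ → F η < β) ∧
      ∃ α, α < β ∧ z α = F '' Set.Iio ξ} := by
    intro ξ
    have h := Ordinal.lt_wf.fix_eq body ξ
    show Ordinal.lt_wf.fix body ξ = _
    rw [h]
    show sInf _ = sInf _
    congr 1
    ext β
    simp only [Set.mem_setOf_eq, Set.image_eq_range, F]
  -- main invariant
  have main : ∀ ξ, ξ < κ.ord → F ξ ∈ C ∧ (∀ η, η < ξ → F η < F ξ) ∧
      ∃ α, α < F ξ ∧ z α = F '' Set.Iio ξ := by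
    intro ξ
    induction ξ using Ordinal.induction with
    | _ ξ IH =>
    intro hξ
    have himgsub : F '' Set.Iio ξ ⊆ Set.Iio δ := by
      rintro _ ⟨η, hη, rfl⟩
      exact hCsub (IH η hη (hη.trans hξ)).1
    have himgcard : #(F '' Set.Iio ξ) < Cardinal.lift.{1} κ := by
      refine lt_of_le_of_lt Cardinal.mk_image_le ?_
      rw [Ordinal.mk_Iio_ordinal]
      exact Cardinal.lift_lt.2 (Cardinal.lt_ord.1 hξ)
    obtain ⟨α, hαδ, hzα⟩ := hsurj _ himgsub himgcard
    have hb : Ordinal.bsup ξ (fun η _ => F η) < δ := by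
      apply Ordinal.bsup_lt_ord
      · rw [hδcof]; exact (Cardinal.lt_ord.1 hξ).trans (Order.lt_succ κ)
      · intro η hη; exact hCsub (IH η hη (hη.trans hξ)).1
    obtain ⟨β, hβC, hβgt⟩ := hCunb (max (Ordinal.bsup ξ fun η _ => F η) α) (max_lt hb hαδ)
    have hne : {β | β ∈ C ∧ (∀ η, η < ξ → F η < β) ∧
        ∃ α, α < β ∧ z α = F '' Set.Iio ξ}.Nonempty := by
      refine ⟨β, hβC, fun η hη => ?_, α, ?_, hzα⟩
      · exact (Ordinal.le_bsup (fun η _ => F η) η hη).trans_lt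
          ((le_max_left _ _).trans_lt hβgt)
      · exact (le_max_right _ _).trans_lt hβgt
    have hmem := csInf_mem hne
    rw [← hfix ξ] at hmem
    exact hmem
  have hmono : ∀ {η ξ : Ordinal}, η ≤ ξ → ξ < κ.ord → F η ≤ F ξ := by
    intro η ξ h hξ
    rcases h.lt_or_eq with h | rfl
    · exact ((main ξ hξ).2.1 η h).le
    · exact le_rfl
  -- the limit point
  set γ : Ordinal.{0} := Ordinal.blsub κ.ord (fun ξ _ => F ξ) with hγdef
  have hFltγ : ∀ ξ, ξ < κ.ord → F ξ < γ := fun ξ h => Ordinal.lt_blsub _ ξ h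
  have hcofinal : ∀ β, β < γ → ∃ ξ, ξ < κ.ord ∧ β ≤ F ξ := by
    intro β hβ
    obtain ⟨ξ, hξ, hle⟩ := Ordinal.lt_blsub_iff.1 hβ
    exact ⟨ξ, hξ, hle⟩
  have hγδ : γ < δ := by
    apply Ordinal.blsub_lt_ord
    · rw [Cardinal.card_ord, hδcof]; exact Order.lt_succ κ
    · intro ξ hξ; exact hCsub (main ξ hξ).1
  have hγ0 : 0 < γ := lt_of_le_of_lt zero_le (hFltγ 0 hκlim.pos)
  have hγC : γ ∈ C := by
    refine hCcl γ hγδ hγ0 fun β hβ => ?_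
    obtain ⟨ξ, hξ, hle⟩ := hcofinal β hβ
    have hsucc : Order.succ ξ < κ.ord := hκlim.succ_lt hξ
    exact ⟨F (Order.succ ξ), (main _ hsucc).1,
      hle.trans_lt ((main _ hsucc).2.1 ξ (Order.lt_succ ξ)), hFltγ _ hsucc⟩
  have hcof : γ.cof = κ := by
    refine le_antisymm ((Ordinal.cof_blsub_le _).trans (le_of_eq (Cardinal.card_ord κ))) ?_
    refine Ordinal.le_cof_iff_lsub.2 fun {ι} g' hg' => ?_
    by_contra hlt
    push_neg at hlt
    have hgγ : ∀ i, g' i < γ := fun i => hg' ▸ Ordinal.lt_lsub g' i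
    choose ξ hξlt hξle using fun i => Ordinal.lt_blsub_iff.1 (hgγ i)
    have hs : iSup ξ < κ.ord := Ordinal.iSup_lt_ord (by rwa [hκcof]) hξlt
    have hsucc : Order.succ (iSup ξ) < κ.ord := hκlim.succ_lt hs
    have hall : ∀ i, g' i < F (Order.succ (iSup ξ)) := by
      intro i
      calc g' i ≤ F (ξ i) := hξle i
        _ ≤ F (iSup ξ) := hmono (Ordinal.le_iSup ξ i) hs
        _ < F (Order.succ (iSup ξ)) := (main _ hsucc).2.1 _ (Order.lt_succ _)
    have : γ ≤ F (Order.succ (iSup ξ)) := hg' ▸ Ordinal.lsub_le hall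
    exact absurd (hFltγ _ hsucc) this.not_gt
  refine ⟨γ, ⟨⟨hγδ, hcof⟩, ?_⟩, hγC⟩
  refine ⟨F, ?_, ?_, ?_, ?_⟩ <;> rw [hcof]
  · exact fun ξ η h hη => (main η hη).2.1 ξ h
  · exact hFltγ
  · exact fun β hβ => hcofinal β hβ
  · intro ξ hξ
    obtain ⟨α, hα, hzα⟩ := (main ξ hξ).2.2
    exact ⟨α, hα.trans (hFltγ ξ hξ), hzα⟩
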